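/- Let (Ω, 𝓔) be a measurable space, H a separable complex Hilbert space, and X : Ω → Submodule ℂ H a random closed subspace, i.e. each X ω is closed and {ω | ((X ω : Set H) ∩ U).Nonempty} is measurable for every open U ⊆ H. Then there exists a sequence of measurable maps eₙ : Ω → H such that for every ω: (1) eₙ ω ∈ X ω for all n; (2) ‖eₙ ω‖ = 1 or eₙ ω = 0 for each n; (3) ⟪eₘ ω, eₙ ω⟫ = 0 for m ≠ n; and (4) the closure of the linear span of {eₙ ω | n ∈ ℕ} equals X ω. That is, every random closed subspace admits a random orthonormal basis. -/

import Mathlib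

open scoped InnerProductSpace

open Filter Metric Set

open InnerProductSpace

section Aux

variable {H : Type*} [NormedAddCommGroup H] [InnerProductSpace ℂ H]

/-- Parallelogram-law estimate: for `x, y` in a submodule `K`,
the distance between `x` and `y` is controlled by their distances to `v`
and the distance from `v` to `K`. -/
lemma aux_parallelogram (K : Submodule ℂ H) (v x y : H) (hx : x ∈ K) (hy : y ∈ K) :
    dist x y ^ 2 ≤ 2 * dist x v ^ 2 + 2 * dist y v ^ 2
      - 4 * Metric.infDist v (K : Set H) ^ 2 := by
  have hm : (2:ℂ)⁻¹ • (x + y) ∈ K := K.smul_mem _ (K.add_mem hx hy)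
  have hDm : Metric.infDist v (K : Set H) ≤ dist v ((2:ℂ)⁻¹ • (x + y)) :=
    Metric.infDist_le_dist_of_mem hm
  have hD0 : 0 ≤ Metric.infDist v (K : Set H) := Metric.infDist_nonneg
  have hpar := parallelogram_law_with_norm ℂ (x - v) (y - v)
  have h2 : x - v + (y - v) = (2:ℂ) • ((2:ℂ)⁻¹ • (x + y) - v) := by
    rw [smul_sub, smul_smul]
    norm_num
    rw [two_smul]
    abel
  have hnorm : ‖x - v + (y - v)‖ = 2 * dist v ((2:ℂ)⁻¹ • (x + y)) := by
    rw [h2, norm_smul, dist_comm, dist_eq_norm]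
    norm_num
  have hxy : x - v - (y - v) = x - y := by abel
  rw [hxy, hnorm] at hpar
  rw [dist_eq_norm, dist_eq_norm x v, dist_eq_norm y v]
  nlinarith [norm_nonneg (x - y), dist_nonneg (x := v) (y := (2:ℂ)⁻¹ • (x + y))]

end Aux

/-- Measurability of `ω ↦ gramSchmidt` applied to measurable families. -/
lemma aux_measurable_gramSchmidt {Ω : Type*} [MeasurableSpace Ω]
    {H : Type*} [NormedAddCommGroup H] [InnerProductSpace ℂ H]
    [SecondCountableTopology H] [MeasurableSpace H] [BorelSpace H]
    (F : ℕ → Ω → H) (hF : ∀ n, Measurable (F n)) (n : ℕ) :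
    Measurable fun ω => gramSchmidt ℂ (fun j => F j ω) n := by
  induction n using Nat.strong_induction_on with
  | _ n ih =>
    have hrw : (fun ω => gramSchmidt ℂ (fun j => F j ω) n)
        = fun ω => F n ω - ∑ i ∈ Finset.Iio n,
            (⟪gramSchmidt ℂ (fun j => F j ω) i, F n ω⟫_ℂ /
              (‖gramSchmidt ℂ (fun j => F j ω) i‖ : ℂ) ^ 2) •
              gramSchmidt ℂ (fun j => F j ω) i := by
      funext ω
      exact eq_sub_iff_add_eq.2 (gramSchmidt_def'' ℂ (fun j => F j ω) n).symm
    rw [hrw]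
    refine (hF n).sub (Finset.measurable_sum _ fun i hi => ?_)
    have hgi := ih i (Finset.mem_Iio.mp hi)
    exact ((hgi.inner (hF n)).div
      ((Complex.measurable_ofReal.comp hgi.norm).pow_const 2)).smul hgi

set_option maxHeartbeats 2000000 in
/-- Every random closed subspace of a separable complex Hilbert space admits a
random orthonormal basis: a sequence of measurable maps `eₙ : Ω → H` whose
values lie in `X ω`, are unit vectors or zero, are pairwise orthogonal, and
whose closed linear span is `X ω`. -/
theorem random_closed_subspace_has_random_orthonormal_basis
    {Ω : Type*} [MeasurableSpace Ω]
    {H : Type*} [NormedAddCommGroup H] [InnerProductSpace ℂ H] [CompleteSpace H]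
    [SecondCountableTopology H] [MeasurableSpace H] [BorelSpace H]
    (X : Ω → Submodule ℂ H) (hXclosed : ∀ ω, IsClosed ((X ω : Set H)))
    (hXmeas : ∀ U : Set H, IsOpen U →
      MeasurableSet {ω : Ω | ((X ω : Set H) ∩ U).Nonempty}) :
    ∃ e : ℕ → Ω → H, (∀ n, Measurable (e n)) ∧ ∀ ω : Ω,
      (∀ n, e n ω ∈ X ω) ∧
      (∀ n, ‖e n ω‖ = 1 ∨ e n ω = 0) ∧
      (∀ m n, m ≠ n → ⟪e m ω, e n ω⟫_ℂ = 0) ∧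
      closure ((Submodule.span ℂ (Set.range fun n => e n ω) : Submodule ℂ H) : Set H)
        = (X ω : Set H) := by
  classical
  haveI : Nonempty H := ⟨0⟩
  -- a dense sequence in H
  obtain ⟨d, hd⟩ := TopologicalSpace.exists_dense_seq H
  have hXne : ∀ ω, ((X ω : Set H)).Nonempty := fun ω => ⟨0, (X ω).zero_mem⟩
  -- measurability of the distance functions
  have hD : ∀ v : H, Measurable fun ω => Metric.infDist v (X ω : Set H) := by
    intro v
    apply measurable_of_Iio
    intro r
    have : (fun ω => Metric.infDist v (X ω : Set H)) ⁻¹' Set.Iio r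
        = {ω | ((X ω : Set H) ∩ Metric.ball v r).Nonempty} := by
      ext ω
      simp only [Set.mem_preimage, Set.mem_Iio, Set.mem_setOf_eq]
      rw [Metric.infDist_lt_iff (hXne ω)]
      constructor
      · rintro ⟨y, hy, hdy⟩
        exact ⟨y, hy, by rwa [Metric.mem_ball, dist_comm]⟩
      · rintro ⟨y, hy, hdy⟩
        exact ⟨y, hy, by rwa [Metric.mem_ball, dist_comm] at hdy⟩
    rw [this]
    exact hXmeas _ Metric.isOpen_ball
  -- radii
  set r : ℕ → ℝ := fun n => ((n : ℝ) + 1)⁻¹ with hr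
  have hrpos : ∀ n, 0 < r n := fun n => by positivity
  have hrto : Tendsto r atTop (nhds 0) := by
    simpa [hr, one_div] using tendsto_one_div_add_atTop_nhds_zero_nat (𝕜 := ℝ)
  -- the approximating selections
  have hex : ∀ (j n : ℕ) (ω : Ω), ∃ k,
      dist (d k) (d j) < Metric.infDist (d j) (X ω : Set H) + r n ∧
      ((X ω : Set H) ∩ Metric.ball (d k) (r n)).Nonempty := by
    intro j n ω
    obtain ⟨x, hxmem, hxd⟩ := (Metric.infDist_lt_iff (hXne ω)).1
      (show Metric.infDist (d j) (X ω : Set H)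
          < Metric.infDist (d j) (X ω : Set H) + r n / 2 by
        have := hrpos n; linarith)
    obtain ⟨k, hk⟩ := hd.exists_dist_lt x (half_pos (hrpos n))
    refine ⟨k, ?_, ⟨x, hxmem, ?_⟩⟩
    · calc dist (d k) (d j) ≤ dist (d k) x + dist x (d j) := dist_triangle _ _ _
        _ < r n / 2 + (Metric.infDist (d j) (X ω : Set H) + r n / 2) := by
            rw [dist_comm (d k) x, dist_comm x (d j)]; exact add_lt_add hk hxd
        _ = Metric.infDist (d j) (X ω : Set H) + r n := by ring
    · rw [Metric.mem_ball]
      have h2 : r n / 2 < r n := by have := hrpos n; linarith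
      exact hk.trans h2
  set g : ℕ → ℕ → Ω → H := fun j n ω => d (Nat.find (hex j n ω)) with hg
  have hgspec : ∀ (j n : ℕ) (ω : Ω),
      dist (g j n ω) (d j) < Metric.infDist (d j) (X ω : Set H) + r n ∧
      ((X ω : Set H) ∩ Metric.ball (g j n ω) (r n)).Nonempty :=
    fun j n ω => Nat.find_spec (hex j n ω)
  have hgmeas : ∀ j n, Measurable (g j n) := by
    intro j n
    apply measurable_from_top.comp
    apply measurable_find
    intro k
    have h1 : MeasurableSet {ω : Ω |
        dist (d k) (d j) < Metric.infDist (d j) (X ω : Set H) + r n} := by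
      have : {ω : Ω | dist (d k) (d j) < Metric.infDist (d j) (X ω : Set H) + r n}
          = (fun ω => Metric.infDist (d j) (X ω : Set H)) ⁻¹'
              Set.Ioi (dist (d k) (d j) - r n) := by
        ext ω; simp [Set.mem_Ioi, sub_lt_iff_lt_add]
      rw [this]
      exact (hD (d j)) measurableSet_Ioi
    exact h1.inter (hXmeas _ Metric.isOpen_ball)
  -- each approximating sequence is Cauchy
  have hcauchy : ∀ (j : ℕ) (ω : Ω), CauchySeq fun n => g j n ω := by
    intro j ω
    set D := Metric.infDist (d j) (X ω : Set H) with hDdef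
    have hD0 : 0 ≤ D := Metric.infDist_nonneg
    rw [Metric.cauchySeq_iff]
    intro ε hε
    set δ : ℝ := min (min (ε / 8) 1) (ε ^ 2 / (64 * (D + 1))) with hδ
    have hδpos : 0 < δ := by
      apply lt_min (lt_min (by linarith) one_pos)
      positivity
    obtain ⟨N, hN⟩ := exists_nat_gt δ⁻¹
    have hrδ : ∀ m ≥ N, r m < δ := by
      intro m hm
      have h1 : δ⁻¹ < (m : ℝ) + 1 := by
        calc δ⁻¹ < (N : ℝ) := hN
          _ ≤ (m : ℝ) := by exact_mod_cast hm
          _ < (m : ℝ) + 1 := by linarith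
      have := (inv_strictAnti₀ (by positivity) h1)
      rwa [inv_inv] at this
    refine ⟨N, fun m hm n hn => ?_⟩
    obtain ⟨hm1, x, hxmem, hxball⟩ := hgspec j m ω
    obtain ⟨hn1, y, hymem, hyball⟩ := hgspec j n ω
    rw [Metric.mem_ball] at hxball hyball
    have hrm := hrδ m hm
    have hrn := hrδ n hn
    -- distances of x, y to d j
    have hxd : dist x (d j) < D + 2 * δ := by
      calc dist x (d j) ≤ dist x (g j m ω) + dist (g j m ω) (d j) := dist_triangle _ _ _
        _ < r m + (D + r m) := add_lt_add hxball hm1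
        _ ≤ D + 2 * δ := by linarith
    have hyd : dist y (d j) < D + 2 * δ := by
      calc dist y (d j) ≤ dist y (g j n ω) + dist (g j n ω) (d j) := dist_triangle _ _ _
        _ < r n + (D + r n) := add_lt_add hyball hn1
        _ ≤ D + 2 * δ := by linarith
    have hkey := aux_parallelogram (X ω) (d j) x y hxmem hymem
    have hδ8 : δ ≤ ε / 8 := (min_le_left _ _).trans (min_le_left _ _)
    have hδ1 : δ ≤ 1 := (min_le_left _ _).trans (min_le_right _ _)
    have hδ2 : δ ≤ ε ^ 2 / (64 * (D + 1)) := min_le_right _ _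
    have hδ2' : 64 * δ * (D + 1) ≤ ε ^ 2 := by
      rw [le_div_iff₀ (by positivity : (0:ℝ) < 64 * (D + 1))] at hδ2
      linarith
    have hxy2 : dist x y ^ 2 ≤ ε ^ 2 / 4 := by
      nlinarith [dist_nonneg (x := x) (y := d j), dist_nonneg (x := y) (y := d j), hD0]
    have hxy : dist x y ≤ ε / 2 := by
      nlinarith [dist_nonneg (x := x) (y := y), hε]
    calc dist (g j m ω) (g j n ω)
        ≤ dist (g j m ω) x + dist x y + dist y (g j n ω) := dist_triangle4 _ _ _ _
      _ < r m + ε / 2 + r n := by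
          rw [dist_comm (g j m ω) x]
          exact add_lt_add (add_lt_add_of_lt_of_le hxball hxy) hyball
      _ < δ + ε / 2 + δ := by linarith
      _ ≤ ε / 8 + ε / 2 + ε / 8 := by linarith
      _ < ε := by linarith
  -- the limits: measurable selections with dense range in X ω
  set f : ℕ → Ω → H := fun j ω => limUnder atTop fun n => g j n ω with hf
  have htend : ∀ (j : ℕ) (ω : Ω),
      Tendsto (fun n => g j n ω) atTop (nhds (f j ω)) :=
    fun j ω => (hcauchy j ω).tendsto_limUnder
  have hfmeas : ∀ j, Measurable (f j) := by
    intro j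
    apply measurable_of_tendsto_metrizable (fun n => hgmeas j n)
    rw [tendsto_pi_nhds]
    exact fun ω => htend j ω
  -- auxiliary: points of X ω close to g j n ω
  have hclose : ∀ (j : ℕ) (ω : Ω), ∃ h : ℕ → H,
      (∀ n, h n ∈ X ω) ∧ ∀ n, dist (h n) (g j n ω) < r n := by
    intro j ω
    choose h h1 h2 using fun n => (hgspec j n ω).2
    exact ⟨h, fun n => (h1 n), fun n => by
      have := (h1 n); exact Metric.mem_ball.1 (h2 n)⟩
  have hfmem : ∀ (j : ℕ) (ω : Ω), f j ω ∈ X ω := by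
    intro j ω
    obtain ⟨h, hmem, hdist⟩ := hclose j ω
    have hdto : Tendsto (fun n => dist (g j n ω) (h n)) atTop (nhds 0) := by
      apply squeeze_zero (fun n => dist_nonneg)
        (fun n => (le_of_lt (by rw [dist_comm]; exact hdist n)))
      exact hrto
    have hhto : Tendsto h atTop (nhds (f j ω)) :=
      (htend j ω).congr_dist hdto
    exact (hXclosed ω).mem_of_tendsto hhto (Filter.Eventually.of_forall hmem)
  have hfdist : ∀ (j : ℕ) (ω : Ω),
      dist (f j ω) (d j) ≤ Metric.infDist (d j) (X ω : Set H) := by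
    intro j ω
    have h1 : Tendsto (fun n => dist (g j n ω) (d j)) atTop
        (nhds (dist (f j ω) (d j))) := (htend j ω).dist tendsto_const_nhds
    have h2 : Tendsto (fun n => Metric.infDist (d j) (X ω : Set H) + r n) atTop
        (nhds (Metric.infDist (d j) (X ω : Set H))) := by
      simpa using tendsto_const_nhds.add hrto
    exact le_of_tendsto_of_tendsto' h1 h2 fun n => (hgspec j n ω).1.le
  -- density of the range of the selections
  have hdense : ∀ ω, (X ω : Set H) ⊆ closure (Set.range fun j => f j ω) := by
    intro ω x hx
    rw [Metric.mem_closure_iff]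
    intro ε hε
    obtain ⟨j, hj⟩ := hd.exists_dist_lt x (by positivity : (0:ℝ) < ε / 3)
    have hDj : Metric.infDist (d j) (X ω : Set H) ≤ dist (d j) x :=
      Metric.infDist_le_dist_of_mem hx
    refine ⟨f j ω, ⟨j, rfl⟩, ?_⟩
    calc dist x (f j ω) ≤ dist x (d j) + dist (d j) (f j ω) := dist_triangle _ _ _
      _ ≤ dist x (d j) + Metric.infDist (d j) (X ω : Set H) := by
          rw [dist_comm (d j) (f j ω)]; linarith [hfdist j ω]
      _ ≤ dist x (d j) + dist (d j) x := by linarith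
      _ < ε := by rw [dist_comm (d j) x]; linarith [hj]
  -- Gram-Schmidt
  refine ⟨fun n ω => gramSchmidtNormed ℂ (fun j => f j ω) n, ?_, ?_⟩
  · intro n
    have hgs := aux_measurable_gramSchmidt f hfmeas n
    exact ((Complex.measurable_ofReal.comp hgs.norm).inv).smul hgs
  · intro ω
    have hspanle : Submodule.span ℂ (Set.range fun j => f j ω) ≤ X ω :=
      Submodule.span_le.2 (Set.range_subset_iff.2 fun j => hfmem j ω)
    refine ⟨?_, ?_, ?_, ?_⟩
    · intro n
      apply Submodule.smul_mem
      have := gramSchmidt_mem_span ℂ (fun j => f j ω) (le_refl n)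
      refine hspanle (Submodule.span_mono ?_ this)
      exact Set.image_subset_range _ _
    · intro n
      by_cases h : gramSchmidt ℂ (fun j => f j ω) n = 0
      · right; simp only [gramSchmidtNormed, h, smul_zero]
      · left
        simp only [gramSchmidtNormed]
        exact norm_smul_inv_norm h
    · intro m n hmn
      simp only [gramSchmidtNormed, inner_smul_left, inner_smul_right,
        gramSchmidt_orthogonal ℂ _ hmn, mul_zero]
    · have hrange : (Set.range fun n => gramSchmidtNormed ℂ (fun j => f j ω) n)
          = Set.range (gramSchmidtNormed ℂ fun j => f j ω) := rfl
      rw [hrange, span_gramSchmidtNormed_range, span_gramSchmidt]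
      apply Set.Subset.antisymm
      · exact closure_minimal hspanle (hXclosed ω)
      · exact fun x hx => closure_mono
          (fun y hy => Submodule.subset_span hy) (hdense ω hx)
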